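/- The class D_{σ_T} is closed under extensions: if 0 → L → M → N → 0 is a short exact sequence with L and N in D_{σ_T}, then M is in D_{σ_T}. -/

import Mathlib

open CategoryTheory

/-- `X` belongs to `add T`: a direct summand of a finite direct sum of copies of `T`. -/
def InAdd (A : Type) [Ring A] (T X : Type) [AddCommGroup T] [Module A T]
    [AddCommGroup X] [Module A X] : Prop :=
  ∃ (m : ℕ) (ι : X →ₗ[A] (Fin m → T)) (π : (Fin m → T) →ₗ[A] X), π ∘ₗ ι = LinearMap.id

/-- An `(n+1)`-projective presentation `P_n → ⋯ → P_0 → T → 0` of `T`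
(with `P i` trivial for `i > n`). -/
structure ProjPres (A : Type) [Ring A] (n : ℕ) (T : Type) [AddCommGroup T] [Module A T] where
  P : ℕ → ModuleCat.{0} A
  f : ∀ i, P (i + 1) →ₗ[A] P i
  ε : P 0 →ₗ[A] T
  projective : ∀ i, Module.Projective A (P i)
  triv : ∀ i, n < i → Subsingleton (P i)
  surj : Function.Surjective ε
  exact0 : Function.Exact (f 0) ε
  exact : ∀ i < n, Function.Exact (f (i + 1)) (f i)

variable {A : Type} [Ring A] {n : ℕ} {T : Type} [AddCommGroup T] [Module A T]

/-- Membership in the class `𝒟_{σ_T,k}`: exactness of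
`Hom(P_{n-k},M) → ⋯ → Hom(P_n,M) → 0`. -/
def ProjPres.MemDk (σ : ProjPres A n T) (k : ℕ) (M : ModuleCat.{0} A) : Prop :=
  ∀ i, n - k ≤ i → i < n → ∀ g : σ.P (i + 1) →ₗ[A] M, g ∘ₗ σ.f (i + 1) = 0 →
    ∃ h : σ.P i →ₗ[A] M, g = h ∘ₗ σ.f i

/-- Membership in the class `𝒟_{σ_T}`. -/
def ProjPres.MemD (σ : ProjPres A n T) (M : ModuleCat.{0} A) : Prop :=
  σ.MemDk n M

/-- An exact sequence `A → T_0 → ⋯ → T_n → 0` with all `T_i ∈ add T`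
(with `Q i` trivial for `i > n`). -/
structure AddPres (A : Type) [Ring A] (n : ℕ) (T : Type) [AddCommGroup T] [Module A T] where
  Q : ℕ → ModuleCat.{0} A
  g0 : A →ₗ[A] Q 0
  g : ∀ i, Q i →ₗ[A] Q (i + 1)
  inAdd : ∀ i ≤ n, InAdd A T (Q i)
  triv : ∀ i, n < i → Subsingleton (Q i)
  exact0 : Function.Exact g0 (g 0)
  exact : ∀ i < n, Function.Exact (g i) (g (i + 1))

/-- Membership in the class `𝒟_{σ_A,k}`: exactness of
`Hom(T_{k-1},M) → ⋯ → Hom(T_0,M) → Hom(A,M) → 0`. -/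
def AddPres.MemDAk (σ : AddPres A n T) (k : ℕ) (M : ModuleCat.{0} A) : Prop :=
  (∀ u : A →ₗ[A] M, ∃ h : σ.Q 0 →ₗ[A] M, u = h ∘ₗ σ.g0) ∧
  (2 ≤ k → ∀ h : σ.Q 0 →ₗ[A] M, h ∘ₗ σ.g0 = 0 →
    ∃ h' : σ.Q 1 →ₗ[A] M, h = h' ∘ₗ σ.g 0) ∧
  (∀ i, i + 3 ≤ k → ∀ h : σ.Q (i + 1) →ₗ[A] M, h ∘ₗ σ.g i = 0 →
    ∃ h' : σ.Q (i + 2) →ₗ[A] M, h = h' ∘ₗ σ.g (i + 1))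

/-- Membership in the class `𝒟_{σ_A}`. -/
def AddPres.MemDA (σ : AddPres A n T) (M : ModuleCat.{0} A) : Prop :=
  σ.MemDAk (n + 1) M

/-- `M ∈ Pres^k(T)`: there is an exact sequence `C_k → ⋯ → C_1 → M → 0` with `C_i ∈ add T`. -/
def MemPres (A : Type) [Ring A] (T : Type) [AddCommGroup T] [Module A T]
    (k : ℕ) (M : ModuleCat.{0} A) : Prop :=
  ∃ (C : ℕ → ModuleCat.{0} A) (f : ∀ i, C (i + 1) →ₗ[A] C i) (ε : C 0 →ₗ[A] M),
    (∀ i < k, InAdd A T (C i)) ∧ Function.Surjective ε ∧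
    (2 ≤ k → Function.Exact (f 0) ε) ∧
    (∀ i, i + 3 ≤ k → Function.Exact (f (i + 1)) (f i))

/-- `M ∈ Gen(T)`. -/
def MemGen (A : Type) [Ring A] (T : Type) [AddCommGroup T] [Module A T]
    (M : ModuleCat.{0} A) : Prop :=
  MemPres A T 1 M

/-- `M ∈ Appres^k(T)` : `M` admits an approximate `k`-`add T`-presentation. -/
def MemAppres (A : Type) [Ring A] (T : Type) [AddCommGroup T] [Module A T]
    (k : ℕ) (M : ModuleCat.{0} A) : Prop :=
  ∃ (C : ℕ → ModuleCat.{0} A) (f : ∀ i, C (i + 1) →ₗ[A] C i) (ε : C 0 →ₗ[A] M),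
    (∀ i < k, InAdd A T (C i)) ∧ Function.Surjective ε ∧
    (2 ≤ k → Function.Exact (f 0) ε) ∧
    (∀ i, i + 3 ≤ k → Function.Exact (f (i + 1)) (f i)) ∧
    (∀ (X : ModuleCat.{0} A), InAdd A T X →
      (∀ u : X →ₗ[A] M, ∃ v : X →ₗ[A] C 0, u = ε ∘ₗ v) ∧
      (2 ≤ k → ∀ v : X →ₗ[A] C 0, ε ∘ₗ v = 0 → ∃ w : X →ₗ[A] C 1, v = f 0 ∘ₗ w) ∧
      (∀ i, i + 3 ≤ k → ∀ w : X →ₗ[A] C (i + 1), f i ∘ₗ w = 0 →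
        ∃ w' : X →ₗ[A] C (i + 2), w = f (i + 1) ∘ₗ w'))

/-- `T` has projective dimension at most `n`. -/
def PdLE (A : Type) [Ring A] (n : ℕ) (T : Type) [AddCommGroup T] [Module A T] : Prop :=
  ∃ σ : ProjPres A n T, (n = 0 → Function.Injective σ.ε) ∧
    ∀ m, m + 1 = n → Function.Injective (σ.f m)

section Ext

variable [HasExt.{0} (ModuleCat.{0} A)]

/-- `Ext^i_A(T,M) = 0`. -/
def ExtVanish (A : Type) [Ring A] (T : Type) [AddCommGroup T] [Module A T]
    [HasExt.{0} (ModuleCat.{0} A)] (M : ModuleCat.{0} A) (i : ℕ) : Prop :=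
  Subsingleton (Abelian.Ext (ModuleCat.of A T) M i)

end Ext

/-- `T` is an `n`-tilting module. -/
def IsNTilting (A : Type) [Ring A] (n : ℕ) (T : Type) [AddCommGroup T] [Module A T]
    [HasExt.{0} (ModuleCat.{0} A)] : Prop :=
  PdLE A n T ∧ (∀ i, 0 < i → ExtVanish A T (ModuleCat.of A T) i) ∧
    ∃ σ : AddPres A n T, Function.Injective σ.g0

/-- `T` is an `n`-AIR-tilting module with respect to `(σ_T, σ_A)`. -/
def IsNAIRTiltingWrt (σT : ProjPres A n T) (σA : AddPres A n T) : Prop :=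
  (∀ i, Module.Finite A (σT.P i)) ∧ σT.MemD (ModuleCat.of A T) ∧ σA.MemDA (ModuleCat.of A T)

/-- `T` is an `n`-AIR-tilting module. -/
def IsNAIRTilting (A : Type) [Ring A] (n : ℕ) (T : Type) [AddCommGroup T] [Module A T] : Prop :=
  ∃ (σT : ProjPres A n T) (σA : AddPres A n T), IsNAIRTiltingWrt σT σA

/-- `T` is a strongly `n`-AIR-tilting module. -/
def IsStronglyNAIRTilting (A : Type) [Ring A] (n : ℕ) (T : Type)
    [AddCommGroup T] [Module A T] : Prop :=
  ∃ (σT : ProjPres A n T) (σA : AddPres A n T), IsNAIRTiltingWrt σT σA ∧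
    ∀ M : ModuleCat.{0} A, σT.MemD M ↔ σA.MemDA M

/-- `T` is an `n`-silting module with respect to `σ_T`. -/
def IsNSiltingWrt (σT : ProjPres A n T) : Prop :=
  (∀ i, Module.Finite A (σT.P i)) ∧ ∀ M : ModuleCat.{0} A, σT.MemD M ↔ MemPres A T n M

/-- `T` is an `n`-silting module. -/
def IsNSilting (A : Type) [Ring A] (n : ℕ) (T : Type) [AddCommGroup T] [Module A T] : Prop :=
  ∃ σT : ProjPres A n T, IsNSiltingWrt σT

/-- `ann`-faithful dimension of `T` is at least `n`: there is an exact sequence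
`A → T_1 → ⋯ → T_n` with `T_i ∈ add T` whose `Hom(-,T)`-dual, augmented by `→ 0`, is exact. -/
def AnnFaithDimGE (A : Type) [Ring A] (n : ℕ) (T : Type) [AddCommGroup T] [Module A T] : Prop :=
  ∃ (Q : ℕ → ModuleCat.{0} A) (g0 : A →ₗ[A] Q 0) (g : ∀ i, Q i →ₗ[A] Q (i + 1)),
    (∀ i < n, InAdd A T (Q i)) ∧
    (2 ≤ n → Function.Exact g0 (g 0)) ∧
    (∀ i, i + 3 ≤ n → Function.Exact (g i) (g (i + 1))) ∧
    (∀ u : A →ₗ[A] T, ∃ h : Q 0 →ₗ[A] T, u = h ∘ₗ g0) ∧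
    (2 ≤ n → ∀ h : Q 0 →ₗ[A] T, h ∘ₗ g0 = 0 → ∃ h' : Q 1 →ₗ[A] T, h = h' ∘ₗ g 0) ∧
    (∀ i, i + 3 ≤ n → ∀ h : Q (i + 1) →ₗ[A] T, h ∘ₗ g i = 0 →
      ∃ h' : Q (i + 2) →ₗ[A] T, h = h' ∘ₗ g (i + 1))

/-- `T` is strongly `n`-quasi-tilting. -/
def IsStronglyNQuasiTilting (A : Type) [Ring A] (n : ℕ) (T : Type)
    [AddCommGroup T] [Module A T] [HasExt.{0} (ModuleCat.{0} A)] : Prop :=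
  (∀ M : ModuleCat.{0} A, MemPres A T n M ↔ MemPres A T (n + 1) M) ∧
  ∀ k, 1 ≤ k → k ≤ n → ∀ M : ModuleCat.{0} A, MemPres A T k M →
    ∀ i, n - k + 1 ≤ i → i ≤ n → ExtVanish A T M i

/-- `T` is `n`-quasi-tilting. -/
def IsNQuasiTilting (A : Type) [Ring A] (n : ℕ) (T : Type)
    [AddCommGroup T] [Module A T] [HasExt.{0} (ModuleCat.{0} A)] : Prop :=
  (∀ M : ModuleCat.{0} A, MemPres A T n M ↔ MemPres A T (n + 1) M) ∧
  ∀ M : ModuleCat.{0} A, MemPres A T n M → ∀ i, 1 ≤ i → i ≤ n → ExtVanish A T M i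

/-- `𝒟_{σ_T}` is closed under extensions. -/
theorem stmt_2 (A : Type) [Ring A] (n : ℕ) (T : Type) [AddCommGroup T] [Module A T]
    (σ : ProjPres A n T) (L M N : ModuleCat.{0} A)
    (α : L →ₗ[A] M) (β : M →ₗ[A] N)
    (hinj : Function.Injective α) (hsurj : Function.Surjective β)
    (hex : Function.Exact α β)
    (hL : σ.MemD L) (hN : σ.MemD N) :
    σ.MemD M := by
  intro i hi0 hin g hg
  -- push down to N
  have hgN : (β ∘ₗ g) ∘ₗ σ.f (i + 1) = 0 := by
    rw [LinearMap.comp_assoc, hg, LinearMap.comp_zero]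
  obtain ⟨hN', hhN⟩ := hN i hi0 hin (β ∘ₗ g) hgN
  -- lift hN' along β using projectivity of P i
  have := σ.projective i
  obtain ⟨h₁, hh₁⟩ := Module.projective_lifting_property β hN' hsurj
  -- d := g - h₁ ∘ f i lands in range α
  set d : σ.P (i + 1) →ₗ[A] M := g - h₁ ∘ₗ σ.f i with hd
  have hmem : ∀ x, d x ∈ LinearMap.range α := by
    intro x
    have hβd : β (d x) = 0 := by
      have h1 : β (g x) = hN' (σ.f i x) := congrFun (congrArg DFunLike.coe hhN) x
      have h2 : β (h₁ (σ.f i x)) = hN' (σ.f i x) := congrFun (congrArg DFunLike.coe hh₁) (σ.f i x)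
      simp [hd, h1, h2]
    exact (hex (d x)).mp hβd
  set e := LinearEquiv.ofInjective α hinj with he
  set g' : σ.P (i + 1) →ₗ[A] L :=
    (e.symm : LinearMap.range α →ₗ[A] L) ∘ₗ d.codRestrict (LinearMap.range α) hmem with hg'
  have hαg' : ∀ x, α (g' x) = d x := by
    intro x
    have : α (e.symm ⟨d x, hmem x⟩) = d x := by
      have := e.apply_symm_apply ⟨d x, hmem x⟩
      have h2 : (↑(e (e.symm ⟨d x, hmem x⟩)) : M) = d x := by rw [this]
      rwa [he, LinearEquiv.ofInjective_apply] at h2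
    exact this
  have hg'0 : g' ∘ₗ σ.f (i + 1) = 0 := by
    ext x
    apply hinj
    have h0 : σ.f i (σ.f (i + 1) x) = 0 := (σ.exact i hin).apply_apply_eq_zero x
    have hgx : g (σ.f (i + 1) x) = 0 := congrFun (congrArg DFunLike.coe hg) x
    simp [hαg', hd, h0, hgx]
  obtain ⟨h₂, hh₂⟩ := hL i hi0 hin g' hg'0
  refine ⟨h₁ + α ∘ₗ h₂, ?_⟩
  ext x
  have hx : g' x = h₂ (σ.f i x) := by rw [hh₂]; rfl
  have : α (h₂ (σ.f i x)) = d x := by rw [← hx, hαg']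
  simp only [LinearMap.add_comp, LinearMap.add_apply, LinearMap.comp_apply, this]
  simp [hd]
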